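/- Assume additionally (Monotonicity) W1 ≥ W0 P-almost surely, and that Y0 and Y1 are integrable. Then the intent-to-treat effect on the outcome equals the total complier treatment effect (the Imbens–Angrist LATE decomposition): E[Y | Z = 1] − E[Y | Z = 0] = E[(Y1 − Y0)·1_C]. -/

import Mathlib

open MeasureTheory ProbabilityTheory

/-- Conditional mean given an event: `E[U | A] := E[U · 1_A] / P(A)`. -/
noncomputable def condMean {Ω : Type*} [MeasurableSpace Ω] (P : Measure Ω)
    (U : Ω → ℝ) (A : Set Ω) : ℝ :=
  (∫ ω in A, U ω ∂P) / (P A).toReal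

/-- If `Z` is independent of `V` and `F ∘ V` is integrable, then the conditional mean of
`F ∘ V` given `{Z = c}` is just its mean. -/
lemma condMean_comp_of_indep {Ω : Type*} [MeasurableSpace Ω] (P : Measure Ω)
    [IsProbabilityMeasure P] (Z : Ω → ℝ) (V : Ω → ℝ × ℝ × ℝ × ℝ)
    (hZ : Measurable Z) (hindep : IndepFun Z V P) (c : ℝ)
    (hc : P {ω | Z ω = c} ≠ 0)
    (F : ℝ × ℝ × ℝ × ℝ → ℝ) (hF : Measurable F)
    (hint : Integrable (fun ω => F (V ω)) P) :
    condMean P (fun ω => F (V ω)) {ω | Z ω = c} = ∫ ω, F (V ω) ∂P := by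
  have hSmeas : MeasurableSet {ω | Z ω = c} := hZ (measurableSet_singleton c)
  set X : Ω → ℝ := fun ω => Set.indicator ({c} : Set ℝ) (fun _ => (1:ℝ)) (Z ω) with hX
  have hXeq : X = Set.indicator {ω | Z ω = c} (fun _ => (1:ℝ)) := by
    funext ω
    by_cases h : Z ω = c
    · simp [hX, h]
    · simp [hX, h, Set.indicator_of_notMem, Set.mem_singleton_iff]
  have hXindep : IndepFun X (fun ω => F (V ω)) P :=
    hindep.comp (φ := Set.indicator ({c} : Set ℝ) (fun _ => (1:ℝ))) (ψ := F)
      (measurable_const.indicator (measurableSet_singleton c)) hF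
  have hXint : Integrable X P := by
    rw [hXeq]
    exact (integrable_const (1:ℝ)).indicator hSmeas
  have hmul : ∫ ω, X ω * F (V ω) ∂P = (∫ ω, X ω ∂P) * ∫ ω, F (V ω) ∂P :=
    hXindep.integral_mul_eq_mul_integral hXint.aestronglyMeasurable hint.aestronglyMeasurable
  have hXint_eq : ∫ ω, X ω ∂P = (P {ω | Z ω = c}).toReal := by
    rw [hXeq, integral_indicator hSmeas]
    simp [setIntegral_const, measureReal_def]
  have hset : ∫ ω in {ω | Z ω = c}, F (V ω) ∂P = ∫ ω, X ω * F (V ω) ∂P := by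
    rw [← integral_indicator hSmeas]
    congr 1
    funext ω
    by_cases h : ω ∈ {ω | Z ω = c}
    · simp [hXeq, Set.indicator_of_mem h]
    · simp [hXeq, Set.indicator_of_notMem h]
  have hne : (P {ω | Z ω = c}).toReal ≠ 0 :=
    ENNReal.toReal_ne_zero.mpr ⟨hc, measure_ne_top P _⟩
  unfold condMean
  rw [hset, hmul, hXint_eq, mul_comm, mul_div_assoc, div_self hne, mul_one]

/-- Imbens–Angrist LATE decomposition: the intent-to-treat effect on the outcome equals the
total complier treatment effect `E[(Y1 − Y0)·1_C]`. -/
theorem itt_equals_total_complier_effect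
    {Ω : Type*} [MeasurableSpace Ω] (P : Measure Ω) [IsProbabilityMeasure P]
    (Z W0 W1 Y0 Y1 : Ω → ℝ)
    (hZ : Measurable Z) (hW0 : Measurable W0) (hW1 : Measurable W1)
    (hY0 : Measurable Y0) (hY1 : Measurable Y1)
    (hZbin : ∀ ω, Z ω = 0 ∨ Z ω = 1)
    (hW0bin : ∀ ω, W0 ω = 0 ∨ W0 ω = 1)
    (hW1bin : ∀ ω, W1 ω = 0 ∨ W1 ω = 1)
    (W Y : Ω → ℝ)
    (hWdef : ∀ ω, W ω = Z ω * W1 ω + (1 - Z ω) * W0 ω)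
    (hYdef : ∀ ω, Y ω = W ω * Y1 ω + (1 - W ω) * Y0 ω)
    (hindep : IndepFun Z (fun ω => (Y0 ω, Y1 ω, W0 ω, W1 ω)) P)
    (hoverlap : 0 < P {ω | Z ω = 1} ∧ P {ω | Z ω = 1} < 1)
    (hmono : ∀ᵐ ω ∂P, W0 ω ≤ W1 ω)
    (hY0int : Integrable Y0 P) (hY1int : Integrable Y1 P) :
    condMean P Y {ω | Z ω = 1} - condMean P Y {ω | Z ω = 0}
      = ∫ ω in {ω | W0 ω < W1 ω}, (Y1 ω - Y0 ω) ∂P := by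
  set V : Ω → ℝ × ℝ × ℝ × ℝ := fun ω => (Y0 ω, Y1 ω, W0 ω, W1 ω) with hV
  set F1 : ℝ × ℝ × ℝ × ℝ → ℝ := fun p => p.2.2.2 * p.2.1 + (1 - p.2.2.2) * p.1 with hF1
  set F0 : ℝ × ℝ × ℝ × ℝ → ℝ := fun p => p.2.2.1 * p.2.1 + (1 - p.2.2.1) * p.1 with hF0
  have hF1m : Measurable F1 := by fun_prop
  have hF0m : Measurable F0 := by fun_prop
  -- integrability
  have bdd : ∀ (Wf : Ω → ℝ), (∀ ω, Wf ω = 0 ∨ Wf ω = 1) → Measurable Wf →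
      Integrable (fun ω => Wf ω * Y1 ω + (1 - Wf ω) * Y0 ω) P := by
    intro Wf hbin hm
    apply Integrable.add
    · refine hY1int.bdd_mul hm.aestronglyMeasurable (c := 1) (Filter.Eventually.of_forall fun ω => ?_)
      rcases hbin ω with h | h <;> simp [h]
    · refine hY0int.bdd_mul (measurable_const.sub hm).aestronglyMeasurable (c := 1) (Filter.Eventually.of_forall fun ω => ?_)
      rcases hbin ω with h | h <;> simp [h]
  have hf1int : Integrable (fun ω => F1 (V ω)) P := bdd W1 hW1bin hW1
  have hf0int : Integrable (fun ω => F0 (V ω)) P := bdd W0 hW0bin hW0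
  -- measure positivity
  have hP1 : P {ω | Z ω = 1} ≠ 0 := hoverlap.1.ne'
  have hP0 : P {ω | Z ω = 0} ≠ 0 := by
    intro h
    have hsub : {ω | Z ω = 1}ᶜ ⊆ {ω | Z ω = 0} := by
      intro ω hω
      rcases hZbin ω with h1 | h1
      · exact h1
      · exact absurd h1 hω
    have h1 : P ({ω | Z ω = 1}ᶜ) = 0 := measure_mono_null hsub h
    rw [measure_compl (show MeasurableSet {ω | Z ω = 1} from hZ (measurableSet_singleton 1)) (measure_ne_top P _), measure_univ] at h1
    exact absurd (tsub_eq_zero_iff_le.mp h1) (not_le.mpr hoverlap.2)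
  -- conditional means
  have hc1 : condMean P Y {ω | Z ω = 1} = ∫ ω, F1 (V ω) ∂P := by
    have heq : condMean P Y {ω | Z ω = 1} = condMean P (fun ω => F1 (V ω)) {ω | Z ω = 1} := by
      unfold condMean
      congr 1
      apply setIntegral_congr_fun (hZ (measurableSet_singleton 1))
      intro ω hω
      have hz : Z ω = 1 := hω
      simp only [hYdef ω, hWdef ω, hz, hF1, hV]
      ring
    rw [heq]
    exact condMean_comp_of_indep P Z V hZ hindep 1 hP1 F1 hF1m hf1int
  have hc0 : condMean P Y {ω | Z ω = 0} = ∫ ω, F0 (V ω) ∂P := by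
    have heq : condMean P Y {ω | Z ω = 0} = condMean P (fun ω => F0 (V ω)) {ω | Z ω = 0} := by
      unfold condMean
      congr 1
      apply setIntegral_congr_fun (hZ (measurableSet_singleton 0))
      intro ω hω
      have hz : Z ω = 0 := hω
      simp only [hYdef ω, hWdef ω, hz, hF0, hV]
      ring
    rw [heq]
    exact condMean_comp_of_indep P Z V hZ hindep 0 hP0 F0 hF0m hf0int
  rw [hc1, hc0, ← integral_sub hf1int hf0int]
  have hC : MeasurableSet {ω | W0 ω < W1 ω} := measurableSet_lt hW0 hW1
  rw [← integral_indicator hC]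
  apply integral_congr_ae
  filter_upwards [hmono] with ω hle
  by_cases h : ω ∈ {ω | W0 ω < W1 ω}
  · have hlt : W0 ω < W1 ω := h
    have h01 : W0 ω = 0 ∧ W1 ω = 1 := by
      rcases hW0bin ω with h0 | h0 <;> rcases hW1bin ω with h1 | h1 <;>
        simp_all <;> linarith
    simp only [hF1, hF0, hV, Set.indicator_of_mem h, h01.1, h01.2]
    ring
  · have heq : W0 ω = W1 ω := le_antisymm hle (not_lt.mp h)
    simp only [hF1, hF0, hV, Set.indicator_of_notMem h, heq]
    ring
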